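/- For every integer n ≥ 1 and every coloring f : {0,…,2^n−1}^3 → {0,1,2,3} satisfying the bmf boundary conditions, there exists a continuous map F : [0,1]^3 → [0,1]^3 that implements f. -/

import Mathlib

/-- α = 2^{-2n} -/
noncomputable def alphaOf (n : ℕ) : ℝ := 2 ^ (-(2 * n : ℤ))

/-- The displacement vectors δ_0 = (−α,−α,−α), δ_1 = (α,0,0), δ_2 = (0,α,0), δ_3 = (0,0,α). -/
noncomputable def deltaOf (n : ℕ) (c : Fin 4) : Fin 3 → ℝ :=
  if c = 0 then (fun _ => -alphaOf n)
  else if c = 1 then (fun m => if m = 0 then alphaOf n else 0)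
  else if c = 2 then (fun m => if m = 1 then alphaOf n else 0)
  else (fun m => if m = 2 then alphaOf n else 0)

/-- Center of the cubelet K_{ijk}: the point 2^{-n}(i + 1/2, j + 1/2, k + 1/2). -/
noncomputable def cubeletCenter (n : ℕ) (i j k : Fin (2 ^ n)) : Fin 3 → ℝ :=
  fun m => (2 : ℝ) ^ (-(n : ℤ)) * (((![(i : ℕ), (j : ℕ), (k : ℕ)] m : ℕ) : ℝ) + 1 / 2)

/-- A cubelet K_{ijk} is exterior if some index equals 0 or 2^n − 1. -/
def ExteriorCubelet (n : ℕ) (i j k : Fin (2 ^ n)) : Prop :=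
  i.val = 0 ∨ j.val = 0 ∨ k.val = 0 ∨
    i.val = 2 ^ n - 1 ∨ j.val = 2 ^ n - 1 ∨ k.val = 2 ^ n - 1

/-- The bmf boundary conditions on a coloring f. -/
def BMFBoundary (n : ℕ) (f : Fin (2 ^ n) → Fin (2 ^ n) → Fin (2 ^ n) → Fin 4) : Prop :=
  ∀ i j k : Fin (2 ^ n),
    (i.val = 0 → f i j k = 1) ∧
    (j.val = 0 → 0 < i.val → f i j k = 2) ∧
    (k.val = 0 → 0 < i.val → 0 < j.val → f i j k = 3) ∧
    (ExteriorCubelet n i j k → 0 < i.val → 0 < j.val → 0 < k.val → f i j k = 0)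

/-- A continuous map F : [0,1]³ → [0,1]³ implements the coloring f :
(a) at each cubelet center, F(x) = x + δ_{f(i,j,k)};
(b) everywhere, F(x) − x lies in the convex hull of the δ-vectors of the cubelets
whose centers lie within L∞ distance 2^{-n} of x. -/
def Implements (n : ℕ) (f : Fin (2 ^ n) → Fin (2 ^ n) → Fin (2 ^ n) → Fin 4)
    (F : (Fin 3 → ℝ) → Fin 3 → ℝ) : Prop :=
  ContinuousOn F (Set.Icc 0 1) ∧
  Set.MapsTo F (Set.Icc 0 1) (Set.Icc 0 1) ∧
  (∀ i j k : Fin (2 ^ n),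
    F (cubeletCenter n i j k) = cubeletCenter n i j k + deltaOf n (f i j k)) ∧
  (∀ x ∈ Set.Icc (0 : Fin 3 → ℝ) 1,
    F x - x ∈ convexHull ℝ
      {v : Fin 3 → ℝ | ∃ i j k : Fin (2 ^ n),
        dist x (cubeletCenter n i j k) ≤ (2 : ℝ) ^ (-(n : ℤ)) ∧ v = deltaOf n (f i j k)})

namespace BMF

variable (n : ℕ)

abbrev Idx (n : ℕ) := Fin (2 ^ n) × Fin (2 ^ n) × Fin (2 ^ n)

def pidx (p : Idx n) (m : Fin 3) : ℕ := ![p.1.val, p.2.1.val, p.2.2.val] m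

noncomputable def ctr (p : Idx n) : Fin 3 → ℝ := cubeletCenter n p.1 p.2.1 p.2.2

lemma ctr_apply (p : Idx n) (m : Fin 3) :
    ctr n p m = (2 : ℝ) ^ (-(n : ℤ)) * ((pidx n p m : ℝ) + 1 / 2) := by
  fin_cases m <;> simp [ctr, cubeletCenter, pidx]

lemma r_pos : (0:ℝ) < 2 ^ (-(n : ℤ)) := by positivity

lemma r_mul_pow : (2:ℝ) ^ (-(n : ℤ)) * 2 ^ n = 1 := by
  rw [zpow_neg, zpow_natCast]
  exact inv_mul_cancel₀ (by positivity)

lemma alpha_pos : 0 < alphaOf n := by unfold alphaOf; positivity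

lemma alpha_le_half_r (hn : 1 ≤ n) : alphaOf n ≤ (2:ℝ) ^ (-(n : ℤ)) / 2 := by
  have h : (2:ℝ) ^ (-(n : ℤ)) / 2 = 2 ^ (-(n+1 : ℤ)) := by
    rw [show (-(n+1:ℤ)) = -(n:ℤ) + (-1) by ring, zpow_add₀ (two_ne_zero : (2:ℝ) ≠ 0), zpow_neg_one]
    ring
  rw [h, alphaOf]
  apply zpow_le_zpow_right₀ (by norm_num)
  omega

noncomputable def hat (t : ℝ) : ℝ := max 0 (1 - 2 ^ n * |t|)

lemma hat_nonneg (t : ℝ) : 0 ≤ hat n t := le_max_left _ _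

lemma hat_le_one (t : ℝ) : hat n t ≤ 1 := by
  have : (0:ℝ) ≤ 2 ^ n * |t| := by positivity
  apply max_le <;> linarith

lemma hat_continuous : Continuous (hat n) :=
  continuous_const.max (by fun_prop)

lemma hat_pos_iff (t : ℝ) : 0 < hat n t ↔ (2:ℝ) ^ n * |t| < 1 := by
  simp only [hat, lt_max_iff, lt_self_iff_false, false_or, sub_pos]

lemma hat_eq_zero (t : ℝ) (h : 1 ≤ (2:ℝ) ^ n * |t|) : hat n t = 0 :=
  max_eq_left (by linarith)

lemma hat_zero : hat n 0 = 1 := by simp [hat]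

lemma abs_lt_of_hat_ne_zero {t : ℝ} (h : hat n t ≠ 0) : |t| < (2:ℝ) ^ (-(n : ℤ)) := by
  have hp : 0 < hat n t := lt_of_le_of_ne (hat_nonneg n t) (Ne.symm h)
  rw [hat_pos_iff] at hp
  rw [zpow_neg, zpow_natCast, inv_eq_one_div, lt_div_iff₀ (by positivity)]
  linarith [hp]

noncomputable def w (p : Idx n) (x : Fin 3 → ℝ) : ℝ := ∏ m : Fin 3, hat n (x m - ctr n p m)

lemma w_nonneg (p : Idx n) (x : Fin 3 → ℝ) : 0 ≤ w n p x :=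
  Finset.prod_nonneg fun m _ => hat_nonneg n _

lemma w_continuous (p : Idx n) : Continuous (w n p) := by
  apply continuous_finset_prod
  intro m _
  exact (hat_continuous n).comp ((continuous_apply m).sub continuous_const)

lemma abs_lt_of_w_ne_zero {p : Idx n} {x : Fin 3 → ℝ} (h : w n p x ≠ 0) (m : Fin 3) :
    |x m - ctr n p m| < (2:ℝ) ^ (-(n : ℤ)) := by
  rw [w, Finset.prod_ne_zero_iff] at h
  exact abs_lt_of_hat_ne_zero n (h m (Finset.mem_univ m))

lemma w_self (p : Idx n) : w n p (ctr n p) = 1 := by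
  rw [w]
  rw [Finset.prod_eq_one]
  intro m _
  simp [hat_zero]

lemma pidx_inj {p q : Idx n} (h : ∀ m, pidx n p m = pidx n q m) : p = q := by
  have h0 := h 0; have h1 := h 1; have h2 := h 2
  simp [pidx] at h0 h1 h2
  exact Prod.ext (Fin.val_injective h0) (Prod.ext (Fin.val_injective h1) (Fin.val_injective h2))

lemma w_other {p q : Idx n} (h : p ≠ q) : w n p (ctr n q) = 0 := by
  obtain ⟨m, hm⟩ : ∃ m, pidx n p m ≠ pidx n q m := by
    by_contra hc
    push_neg at hc
    exact h (pidx_inj n hc)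
  apply Finset.prod_eq_zero (Finset.mem_univ m)
  apply hat_eq_zero
  rw [ctr_apply, ctr_apply, ← mul_sub]
  have h1 : |((pidx n q m : ℝ) + 1/2) - ((pidx n p m : ℝ) + 1/2)| = |(pidx n q m : ℝ) - pidx n p m| := by
    ring_nf
  rw [abs_mul, h1]
  have h2 : (1:ℝ) ≤ |(pidx n q m : ℝ) - pidx n p m| := by
    rw [show ((pidx n q m : ℝ) - pidx n p m) = (((pidx n q m : ℤ) - (pidx n p m : ℤ) : ℤ) : ℝ) by push_cast; ring,
      ← Int.cast_abs]
    have : (1:ℤ) ≤ |(pidx n q m : ℤ) - (pidx n p m : ℤ)| := by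
      rcases lt_or_gt_of_ne (fun hz => hm (by omega : pidx n p m = pidx n q m) : (pidx n p m : ℤ) ≠ (pidx n q m : ℤ)) with hlt | hgt
      · rw [abs_of_pos] <;> omega
      · rw [abs_of_neg] <;> omega
    exact_mod_cast this
  have hr : |(2:ℝ) ^ (-(n : ℤ))| = (2:ℝ) ^ (-(n : ℤ)) := abs_of_pos (r_pos n)
  rw [hr]
  have hrp := r_pos n
  have h2n : (0:ℝ) < 2 ^ n := by positivity
  calc (1:ℝ) = (2:ℝ) ^ n * (2:ℝ) ^ (-(n : ℤ)) := by rw [mul_comm, r_mul_pow]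
    _ ≤ 2 ^ n * ((2:ℝ) ^ (-(n : ℤ)) * |(pidx n q m : ℝ) - pidx n p m|) := by
        apply mul_le_mul_of_nonneg_left _ (le_of_lt h2n)
        exact le_mul_of_one_le_right (le_of_lt hrp) h2

noncomputable def Wsum (x : Fin 3 → ℝ) : ℝ := ∑ p : Idx n, w n p x

lemma Wsum_continuous : Continuous (Wsum n) :=
  continuous_finset_sum _ fun p _ => w_continuous n p

/-- For each coordinate value s ∈ [0,1] there is a grid index within r/2. -/
lemma exists_near_idx (s : ℝ) (h0 : 0 ≤ s) (h1 : s ≤ 1) :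
    ∃ i : Fin (2 ^ n), |s - (2:ℝ) ^ (-(n : ℤ)) * ((i : ℝ) + 1/2)| ≤ (2:ℝ) ^ (-(n : ℤ)) / 2 := by
  set t : ℝ := 2 ^ n * s with ht
  have h2n : (0:ℝ) < 2 ^ n := by positivity
  have htn : t ≤ 2 ^ n := by rw [ht]; nlinarith
  have ht0 : 0 ≤ t := by positivity
  set i0 : ℕ := min (⌊t⌋₊) (2 ^ n - 1) with hi0
  have hipos : i0 < 2 ^ n := by
    have : (1:ℕ) ≤ 2 ^ n := Nat.one_le_two_pow
    omega
  refine ⟨⟨i0, hipos⟩, ?_⟩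
  have h2' : ((2:ℕ) ^ n : ℝ) = (2:ℝ) ^ n := by push_cast; ring
  have key : |t - ((i0 : ℝ) + 1/2)| ≤ 1/2 := by
    by_cases hc : ⌊t⌋₊ ≤ 2 ^ n - 1
    · have : i0 = ⌊t⌋₊ := min_eq_left hc
      rw [this]
      have hfl : (⌊t⌋₊ : ℝ) ≤ t := Nat.floor_le ht0
      have hfu : t < ⌊t⌋₊ + 1 := Nat.lt_floor_add_one t
      rw [abs_le]; constructor <;> linarith
    · push_neg at hc
      have hone : (1:ℕ) ≤ 2 ^ n := Nat.one_le_two_pow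
      have hie : i0 = 2 ^ n - 1 := min_eq_right (by omega)
      have h2 : ((2:ℕ) ^ n : ℝ) ≤ t := by
        calc ((2:ℕ) ^ n : ℝ) ≤ (⌊t⌋₊ : ℝ) := by exact_mod_cast (by omega : 2 ^ n ≤ ⌊t⌋₊)
          _ ≤ t := Nat.floor_le ht0
      have hcast : ((i0 : ℕ) : ℝ) = (2:ℝ) ^ n - 1 := by
        rw [hie]
        push_cast [hone]
        ring
      rw [hcast]
      rw [h2'] at h2
      rw [abs_le]; constructor <;> linarith
  have hrp := r_pos n
  have hs : s = (2:ℝ) ^ (-(n : ℤ)) * t := by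
    rw [ht, show (2:ℝ) ^ (-(n : ℤ)) * (2 ^ n * s) = ((2:ℝ) ^ (-(n : ℤ)) * 2 ^ n) * s by ring, r_mul_pow]
    ring
  have hfv : ((⟨i0, hipos⟩ : Fin (2 ^ n)) : ℝ) = (i0 : ℝ) := rfl
  rw [hfv, hs, ← mul_sub, abs_mul, abs_of_pos hrp]
  calc (2:ℝ) ^ (-(n : ℤ)) * |t - ((i0 : ℝ) + 1/2)|
      ≤ (2:ℝ) ^ (-(n : ℤ)) * (1/2) := mul_le_mul_of_nonneg_left key (le_of_lt hrp)
    _ = (2:ℝ) ^ (-(n : ℤ)) / 2 := by ring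

lemma Wsum_pos {x : Fin 3 → ℝ} (hx : x ∈ Set.Icc (0 : Fin 3 → ℝ) 1) : 0 < Wsum n x := by
  have hx0 : ∀ m, 0 ≤ x m := fun m => hx.1 m
  have hx1 : ∀ m, x m ≤ 1 := fun m => hx.2 m
  have hg : ∀ m : Fin 3, ∃ i : Fin (2 ^ n),
      |x m - (2:ℝ) ^ (-(n : ℤ)) * ((i : ℝ) + 1/2)| ≤ (2:ℝ) ^ (-(n : ℤ)) / 2 :=
    fun m => exists_near_idx n (x m) (hx0 m) (hx1 m)
  choose g hg using hg
  set p : Idx n := (g 0, g 1, g 2) with hp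
  have hpid : ∀ m : Fin 3, (pidx n p m : ℝ) = ((g m : ℕ) : ℝ) := by
    intro m; fin_cases m <;> simp [pidx, hp]
  have hwp : 0 < w n p x := by
    apply Finset.prod_pos
    intro m _
    rw [hat_pos_iff]
    have h1 : |x m - ctr n p m| ≤ (2:ℝ) ^ (-(n : ℤ)) / 2 := by
      rw [ctr_apply, hpid m]
      exact hg m
    have hrp := r_pos n
    have h2n : (0:ℝ) < 2 ^ n := by positivity
    have hmul : (2:ℝ) ^ n * ((2:ℝ) ^ (-(n : ℤ)) / 2) = 1/2 := by
      rw [show (2:ℝ) ^ n * ((2:ℝ) ^ (-(n : ℤ)) / 2) = ((2:ℝ) ^ (-(n : ℤ)) * 2 ^ n) / 2 by ring, r_mul_pow]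
    nlinarith [abs_nonneg (x m - ctr n p m)]
  calc (0:ℝ) < w n p x := hwp
    _ ≤ Wsum n x := Finset.single_le_sum (fun q _ => w_nonneg n q x) (Finset.mem_univ p)

noncomputable def Z (f : Fin (2 ^ n) → Fin (2 ^ n) → Fin (2 ^ n) → Fin 4) (p : Idx n) : Fin 3 → ℝ :=
  deltaOf n (f p.1 p.2.1 p.2.2)

lemma delta_le (c : Fin 4) (m : Fin 3) : deltaOf n c m ≤ alphaOf n := by
  have := alpha_pos n
  fin_cases c <;> fin_cases m <;> simp [deltaOf] <;> linarith

lemma neg_le_delta (c : Fin 4) (m : Fin 3) : -alphaOf n ≤ deltaOf n c m := by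
  have := alpha_pos n
  fin_cases c <;> fin_cases m <;> simp [deltaOf] <;> linarith

variable {f : Fin (2 ^ n) → Fin (2 ^ n) → Fin (2 ^ n) → Fin 4}

lemma Z_nonneg_of_low (hf : BMFBoundary n f) (p : Idx n) (m : Fin 3)
    (h : pidx n p m = 0) : 0 ≤ Z n f p m := by
  obtain ⟨i, j, k⟩ := p
  obtain ⟨h1, h2, h3, _⟩ := hf i j k
  have := alpha_pos n
  fin_cases m <;> simp [pidx] at h
  · rw [Z, h1 (by simp [h])]; simp [deltaOf]; linarith
  · by_cases hi : i.val = 0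
    · rw [Z, h1 hi]; simp [deltaOf]
    · rw [Z, h2 (by simp [h]) (Nat.pos_of_ne_zero hi)]; simp [deltaOf]; linarith
  · by_cases hi : i.val = 0
    · rw [Z, h1 hi]; simp [deltaOf]
    · by_cases hj : j.val = 0
      · rw [Z, h2 hj (Nat.pos_of_ne_zero hi)]; simp [deltaOf]
      · rw [Z, h3 (by simp [h]) (Nat.pos_of_ne_zero hi) (Nat.pos_of_ne_zero hj)]; simp [deltaOf]; linarith

lemma Z_nonpos_of_high (hn : 1 ≤ n) (hf : BMFBoundary n f) (p : Idx n) (m : Fin 3)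
    (h : pidx n p m = 2 ^ n - 1) : Z n f p m ≤ 0 := by
  obtain ⟨i, j, k⟩ := p
  obtain ⟨h1, h2, h3, h4⟩ := hf i j k
  have := alpha_pos n
  have h2n : 2 ≤ 2 ^ n := by
    calc 2 = 2 ^ 1 := rfl
      _ ≤ 2 ^ n := Nat.pow_le_pow_right (by norm_num) hn
  fin_cases m <;> simp [pidx] at h
  · -- i top
    have hi : 0 < i.val := by omega
    by_cases hj : j.val = 0
    · rw [Z, h2 hj hi]; simp [deltaOf]
    · by_cases hk : k.val = 0
      · rw [Z, h3 hk hi (Nat.pos_of_ne_zero hj)]; simp [deltaOf]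
      · rw [Z, h4 (Or.inr (Or.inr (Or.inr (Or.inl h)))) hi (Nat.pos_of_ne_zero hj) (Nat.pos_of_ne_zero hk)]
        simp [deltaOf]; linarith
  · -- j top
    have hj : 0 < j.val := by omega
    by_cases hi : i.val = 0
    · rw [Z, h1 hi]; simp [deltaOf]
    · by_cases hk : k.val = 0
      · rw [Z, h3 hk (Nat.pos_of_ne_zero hi) hj]; simp [deltaOf]
      · rw [Z, h4 (Or.inr (Or.inr (Or.inr (Or.inr (Or.inl h))))) (Nat.pos_of_ne_zero hi) hj (Nat.pos_of_ne_zero hk)]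
        simp [deltaOf]; linarith
  · -- k top
    have hk : 0 < k.val := by omega
    by_cases hi : i.val = 0
    · rw [Z, h1 hi]; simp [deltaOf]
    · by_cases hj : j.val = 0
      · rw [Z, h2 hj (Nat.pos_of_ne_zero hi)]; simp [deltaOf]
      · rw [Z, h4 (Or.inr (Or.inr (Or.inr (Or.inr (Or.inr h))))) (Nat.pos_of_ne_zero hi) (Nat.pos_of_ne_zero hj) hk]
        simp [deltaOf]; linarith

noncomputable def V (f : Fin (2 ^ n) → Fin (2 ^ n) → Fin (2 ^ n) → Fin 4) (x : Fin 3 → ℝ) :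
    Fin 3 → ℝ :=
  (Wsum n x)⁻¹ • ∑ p : Idx n, w n p x • Z n f p

noncomputable def Fmap (f : Fin (2 ^ n) → Fin (2 ^ n) → Fin (2 ^ n) → Fin 4) (x : Fin 3 → ℝ) :
    Fin 3 → ℝ :=
  x + V n f x

lemma V_apply (f : Fin (2 ^ n) → Fin (2 ^ n) → Fin (2 ^ n) → Fin 4) (x : Fin 3 → ℝ) (m : Fin 3) :
    V n f x m = (Wsum n x)⁻¹ * ∑ p : Idx n, w n p x * Z n f p m := by
  simp [V, Finset.sum_apply, smul_eq_mul]

lemma V_le {f : Fin (2 ^ n) → Fin (2 ^ n) → Fin (2 ^ n) → Fin 4} {x : Fin 3 → ℝ} {m : Fin 3}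
    (hW : 0 < Wsum n x) {b : ℝ} (hb : ∀ p : Idx n, w n p x ≠ 0 → Z n f p m ≤ b) :
    V n f x m ≤ b := by
  rw [V_apply]
  have hs : ∑ p : Idx n, w n p x * Z n f p m ≤ ∑ p : Idx n, w n p x * b := by
    apply Finset.sum_le_sum
    intro p _
    by_cases hw : w n p x = 0
    · rw [hw]; ring_nf; exact le_refl 0
    · exact mul_le_mul_of_nonneg_left (hb p hw) (w_nonneg n p x)
  have hsum : ∑ p : Idx n, w n p x * b = Wsum n x * b := by rw [← Finset.sum_mul]; rfl
  rw [inv_mul_le_iff₀ hW]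
  calc ∑ p : Idx n, w n p x * Z n f p m ≤ Wsum n x * b := by rw [← hsum]; exact hs
    _ = Wsum n x * b := rfl

lemma le_V {f : Fin (2 ^ n) → Fin (2 ^ n) → Fin (2 ^ n) → Fin 4} {x : Fin 3 → ℝ} {m : Fin 3}
    (hW : 0 < Wsum n x) {b : ℝ} (hb : ∀ p : Idx n, w n p x ≠ 0 → b ≤ Z n f p m) :
    b ≤ V n f x m := by
  rw [V_apply]
  have hs : ∑ p : Idx n, w n p x * b ≤ ∑ p : Idx n, w n p x * Z n f p m := by
    apply Finset.sum_le_sum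
    intro p _
    by_cases hw : w n p x = 0
    · rw [hw]; ring_nf; exact le_refl 0
    · exact mul_le_mul_of_nonneg_left (hb p hw) (w_nonneg n p x)
  have hsum : ∑ p : Idx n, w n p x * b = Wsum n x * b := by rw [← Finset.sum_mul]; rfl
  rw [le_inv_mul_iff₀ hW]
  calc Wsum n x * b = ∑ p : Idx n, w n p x * b := hsum.symm
    _ ≤ _ := hs

lemma pidx_eq_zero_of_active (hn : 1 ≤ n) {p : Idx n} {x : Fin 3 → ℝ} {m : Fin 3}
    (hw : w n p x ≠ 0) (hxm : x m < alphaOf n) : pidx n p m = 0 := by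
  by_contra hne
  have h1 : 1 ≤ pidx n p m := Nat.one_le_iff_ne_zero.mpr hne
  have habs := abs_lt_of_w_ne_zero n hw m
  rw [ctr_apply] at habs
  have hrp := r_pos n
  have h1' : (1:ℝ) ≤ (pidx n p m : ℝ) := by exact_mod_cast h1
  have hlow : (2:ℝ) ^ (-(n : ℤ)) * ((pidx n p m : ℝ) + 1/2) - (2:ℝ) ^ (-(n : ℤ))
      ≥ (2:ℝ) ^ (-(n : ℤ)) / 2 := by nlinarith
  have := abs_lt.mp habs
  have hxlarge : (2:ℝ) ^ (-(n : ℤ)) / 2 ≤ x m := by linarith [this.1]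
  have := alpha_le_half_r n hn
  linarith

lemma pidx_eq_top_of_active (hn : 1 ≤ n) {p : Idx n} {x : Fin 3 → ℝ} {m : Fin 3}
    (hw : w n p x ≠ 0) (hxm : 1 - alphaOf n < x m) : pidx n p m = 2 ^ n - 1 := by
  have hlt : pidx n p m < 2 ^ n := by
    obtain ⟨i, j, k⟩ := p
    fin_cases m <;> simp [pidx] <;> exact (Fin.is_lt _)
  by_contra hne
  have h2np : (1:ℕ) ≤ 2 ^ n := Nat.one_le_two_pow
  have h2 : pidx n p m + 2 ≤ 2 ^ n := by omega
  have habs := abs_lt_of_w_ne_zero n hw m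
  rw [ctr_apply] at habs
  have hrp := r_pos n
  have h2' : (pidx n p m : ℝ) + 2 ≤ (2:ℝ) ^ n := by
    have := (Nat.cast_le (α := ℝ)).mpr h2
    push_cast at this
    linarith
  have hone : (2:ℝ) ^ (-(n : ℤ)) * 2 ^ n = 1 := r_mul_pow n
  have hup : (2:ℝ) ^ (-(n : ℤ)) * ((pidx n p m : ℝ) + 1/2) + (2:ℝ) ^ (-(n : ℤ))
      ≤ 1 - (2:ℝ) ^ (-(n : ℤ)) / 2 := by nlinarith
  have := abs_lt.mp habs
  have hxsmall : x m ≤ 1 - (2:ℝ) ^ (-(n : ℤ)) / 2 := by linarith [this.2]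
  have := alpha_le_half_r n hn
  linarith

lemma Wsum_at_ctr (p : Idx n) : Wsum n (ctr n p) = 1 := by
  rw [Wsum, Finset.sum_eq_single p]
  · exact w_self n p
  · intro q _ hq
    exact w_other n hq
  · intro h
    exact absurd (Finset.mem_univ p) h

lemma sum_at_ctr (f : Fin (2 ^ n) → Fin (2 ^ n) → Fin (2 ^ n) → Fin 4) (p : Idx n) :
    ∑ q : Idx n, w n q (ctr n p) • Z n f q = Z n f p := by
  rw [Finset.sum_eq_single p]
  · rw [w_self n p, one_smul]
  · intro q _ hq
    rw [w_other n hq, zero_smul]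
  · intro h
    exact absurd (Finset.mem_univ p) h

lemma Fmap_at_ctr (f : Fin (2 ^ n) → Fin (2 ^ n) → Fin (2 ^ n) → Fin 4) (p : Idx n) :
    Fmap n f (ctr n p) = ctr n p + Z n f p := by
  rw [Fmap, V, Wsum_at_ctr, sum_at_ctr]
  norm_num

lemma Fmap_continuousOn (f : Fin (2 ^ n) → Fin (2 ^ n) → Fin (2 ^ n) → Fin 4) :
    ContinuousOn (Fmap n f) (Set.Icc (0 : Fin 3 → ℝ) 1) := by
  have hS : Continuous fun x : Fin 3 → ℝ => ∑ p : Idx n, w n p x • Z n f p :=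
    continuous_finset_sum _ fun p _ => (w_continuous n p).smul continuous_const
  have hWi : ContinuousOn (fun x : Fin 3 → ℝ => (Wsum n x)⁻¹) (Set.Icc 0 1) :=
    ((Wsum_continuous n).continuousOn).inv₀ fun x hx => (Wsum_pos n hx).ne'
  exact continuousOn_id.add (hWi.smul hS.continuousOn)

lemma Fmap_mapsTo (hn : 1 ≤ n) {f : Fin (2 ^ n) → Fin (2 ^ n) → Fin (2 ^ n) → Fin 4}
    (hf : BMFBoundary n f) :
    Set.MapsTo (Fmap n f) (Set.Icc (0 : Fin 3 → ℝ) 1) (Set.Icc 0 1) := by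
  intro x hx
  have hW := Wsum_pos n hx
  have ha := alpha_pos n
  constructor <;> intro m
  · -- 0 ≤ Fmap x m
    show (0 : Fin 3 → ℝ) m ≤ x m + V n f x m
    have h0 : (0 : Fin 3 → ℝ) m = 0 := rfl
    rw [h0]
    rcases lt_or_ge (x m) (alphaOf n) with hc | hc
    · have hv : (0:ℝ) ≤ V n f x m := by
        apply le_V n hW
        intro p hw
        exact Z_nonneg_of_low n hf p m (pidx_eq_zero_of_active n hn hw hc)
      have := hx.1 m
      simp only [Pi.zero_apply] at this
      linarith
    · have hv : -alphaOf n ≤ V n f x m := by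
        apply le_V n hW
        intro p _
        exact neg_le_delta n _ m
      linarith
  · -- Fmap x m ≤ 1
    show x m + V n f x m ≤ (1 : Fin 3 → ℝ) m
    have h1 : (1 : Fin 3 → ℝ) m = 1 := rfl
    rw [h1]
    rcases lt_or_ge (1 - alphaOf n) (x m) with hc | hc
    · have hv : V n f x m ≤ 0 := by
        apply V_le n hW
        intro p hw
        exact Z_nonpos_of_high n hn hf p m (pidx_eq_top_of_active n hn hw hc)
      have := hx.2 m
      simp only [Pi.one_apply] at this
      linarith
    · have hv : V n f x m ≤ alphaOf n := by
        apply V_le n hW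
        intro p _
        exact delta_le n _ m
      linarith

lemma Fmap_hull (f : Fin (2 ^ n) → Fin (2 ^ n) → Fin (2 ^ n) → Fin 4)
    {x : Fin 3 → ℝ} (hx : x ∈ Set.Icc (0 : Fin 3 → ℝ) 1) :
    Fmap n f x - x ∈ convexHull ℝ
      {v : Fin 3 → ℝ | ∃ i j k : Fin (2 ^ n),
        dist x (cubeletCenter n i j k) ≤ (2 : ℝ) ^ (-(n : ℤ)) ∧ v = deltaOf n (f i j k)} := by
  have hsub : Fmap n f x - x = V n f x := by
    rw [Fmap]; abel
  rw [hsub]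
  have hV : V n f x = Finset.univ.centerMass (fun p => w n p x) (Z n f) := by
    rw [Finset.centerMass]
    rfl
  rw [hV, ← Finset.centerMass_filter_ne_zero]
  apply Finset.centerMass_mem_convexHull
  · intro p _
    exact w_nonneg n p x
  · rw [Finset.sum_filter_ne_zero]
    exact Wsum_pos n hx
  · intro p hp
    rw [Finset.mem_filter] at hp
    refine ⟨p.1, p.2.1, p.2.2, ?_, rfl⟩
    rw [dist_pi_le_iff (le_of_lt (r_pos n))]
    intro m
    rw [Real.dist_eq]
    exact le_of_lt (abs_lt_of_w_ne_zero n hp.2 m)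

end BMF

/-- every coloring satisfying the bmf boundary conditions is implemented by
some continuous map F : [0,1]³ → [0,1]³. -/
theorem exists_implementation (n : ℕ) (hn : 1 ≤ n)
    (f : Fin (2 ^ n) → Fin (2 ^ n) → Fin (2 ^ n) → Fin 4)
    (hf : BMFBoundary n f) :
    ∃ F : (Fin 3 → ℝ) → Fin 3 → ℝ, Implements n f F := by
  refine ⟨BMF.Fmap n f, BMF.Fmap_continuousOn n f, BMF.Fmap_mapsTo n hn hf, ?_, ?_⟩
  · intro i j k
    exact BMF.Fmap_at_ctr n f (i, j, k)
  · intro x hx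
    exact BMF.Fmap_hull n f hx
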